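/- The double-arrow space is not a continuous open image of the Sorgenfrey line; that is, there is no surjection from the Sorgenfrey line onto the double-arrow space that is continuous and an open map. -/

import Mathlib

open Set Filter Topology TopologicalSpace Function

noncomputable section

/-- The Sorgenfrey topology on `ℝ`: generated by half-open intervals `[a, b)`. -/
def sorgenfreyTop : TopologicalSpace ℝ :=
  TopologicalSpace.generateFrom {s : Set ℝ | ∃ a b : ℝ, s = Set.Ico a b}

/-- The initial segment `p↾n` of an infinite sequence, as a list. -/
def restr (p : ℕ → ℕ) (n : ℕ) : List ℕ := (List.range n).map p

/-- `fruit V p = ⋂ n, V (p↾n)`. -/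
def fruit {X : Type*} (V : List ℕ → Set X) (p : ℕ → ℕ) : Set X := ⋂ n, V (restr p n)

/-- A Souslin scheme is covering if `V ⟨⟩ = X` and `V a = ⋃ n, V (a ⌢ n)`. -/
def Covering {X : Type*} (V : List ℕ → Set X) : Prop :=
  V [] = Set.univ ∧ ∀ a : List ℕ, V a = ⋃ n : ℕ, V (a ++ [n])

/-- A Souslin scheme is complete if every fruit is nonempty. -/
def CompleteScheme {X : Type*} (V : List ℕ → Set X) : Prop :=
  ∀ q : ℕ → ℕ, (fruit V q).Nonempty

/-- A Souslin scheme has strict branches if every fruit is a singleton. -/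
def StrictBranches {X : Type*} (V : List ℕ → Set X) : Prop :=
  ∀ q : ℕ → ℕ, ∃ x : X, fruit V q = {x}

/-- A Souslin scheme is locally strict. -/
def LocallyStrict {X : Type*} (V : List ℕ → Set X) : Prop :=
  (∀ a : List ℕ, V a = ⋃ n : ℕ, V (a ++ [n])) ∧
  ∀ a : List ℕ, ∀ m k : ℕ, m ≠ k → V (a ++ [m]) ∩ V (a ++ [k]) = ∅

/-- `q ◁ p` for infinite sequences: `q↾n = p↾n` and `q n < p n` for some `n`. -/
def tri (q p : ℕ → ℕ) : Prop := ∃ n : ℕ, restr q n = restr p n ∧ q n < p n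

/-- `q ⊴ p` for infinite sequences. -/
def trieq (q p : ℕ → ℕ) : Prop := tri q p ∨ q = p

/-- `q ◁ s` where `q` is an infinite sequence and `s` a finite one. -/
def triL (q : ℕ → ℕ) (s : List ℕ) : Prop :=
  ∃ n : ℕ, ∃ h : n < s.length, restr q n = s.take n ∧ q n < s.get ⟨n, h⟩

/-- `rsequences(q, n) = {p | q ◁ p ∧ q↾n = p↾n}`. -/
def rsequences (q : ℕ → ℕ) (n : ℕ) : Set (ℕ → ℕ) :=
  {p | tri q p ∧ restr q n = restr p n}

/-- `rsubtree(q, n)`: finite sequences `s` such that `q↾n ⊏ s` and `q ◁ s`. -/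
def rsubtree (q : ℕ → ℕ) (n : ℕ) : Set (List ℕ) :=
  {s | restr q n <+: s ∧ restr q n ≠ s ∧ triL q s}

/-- `cut(V, q, n) = ⋃ {fruit(V, p) : p ∈ rsequences(q, n)}`. -/
def cut {X : Type*} (V : List ℕ → Set X) (q : ℕ → ℕ) (n : ℕ) : Set X :=
  ⋃ p ∈ rsequences q n, fruit V p

/-- `branches(V, x) = {q | x ∈ fruit(V, q)}`. -/
def branches {X : Type*} (V : List ℕ → Set X) (x : X) : Set (ℕ → ℕ) :=
  {q | x ∈ fruit V q}

/-- `q` is a `τ`-base branch of `x` in `V`: `q ∈ branches(V, x)` and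
`{cut(V, q, m) ∪ {x} : m ∈ ℕ}` is a neighborhood base of open sets at `x`. -/
def IsBaseBranch {X : Type*} (τ : TopologicalSpace X) (V : List ℕ → Set X)
    (q : ℕ → ℕ) (x : X) : Prop :=
  x ∈ fruit V q ∧ (∀ m : ℕ, IsOpen[τ] (cut V q m ∪ {x})) ∧
    (@nhds X τ x).HasBasis (fun _ : ℕ => True) (fun m : ℕ => cut V q m ∪ {x})

/-- `BB(V, x, τ)`: the set of `τ`-base branches of `x` in `V`. -/
def BB {X : Type*} (τ : TopologicalSpace X) (V : List ℕ → Set X) (x : X) : Set (ℕ → ℕ) :=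
  {q | IsBaseBranch τ V q x}

/-- A Sorgenfrey base for a space: an open complete covering Souslin scheme
satisfying (S1) and (S2). -/
def IsSorgenfreyBase {X : Type*} (τ : TopologicalSpace X) (V : List ℕ → Set X) : Prop :=
  (∀ a : List ℕ, IsOpen[τ] (V a)) ∧ CompleteScheme V ∧ Covering V ∧
  (∀ x : X, ∀ q ∈ branches V x, ∀ n : ℕ, ∃ t ∈ BB τ V x, restr t n = restr q n) ∧
  (∀ q : ℕ → ℕ, ∃ z : X, q ∈ BB τ V z)

/-- The Souslin scheme `S` on the Baire set: `S a = {p | a ⊑ p}`. -/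
def SchemeS (a : List ℕ) : Set (ℕ → ℕ) := {p | restr p a.length = a}

/-- The topology `σ_𝕊` on `ℕ → ℕ` generated by the base
`{cut(S, p, n) ∪ {p} : p ∈ ℕ → ℕ, n ∈ ℕ}`. -/
def sigmaS : TopologicalSpace (ℕ → ℕ) :=
  TopologicalSpace.generateFrom
    {U : Set (ℕ → ℕ) | ∃ p : ℕ → ℕ, ∃ n : ℕ, U = cut SchemeS p n ∪ {p}}

/-- The underlying set of the double-arrow space, as a subset of `ℝ ×ₗ Bool`
(with `false` playing the role of `0` and `true` the role of `1`). -/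
def DASet : Set (ℝ ×ₗ Bool) :=
  {x | (0 < (ofLex x).1 ∧ (ofLex x).1 ≤ 1 ∧ (ofLex x).2 = false) ∨
       (0 ≤ (ofLex x).1 ∧ (ofLex x).1 < 1 ∧ (ofLex x).2 = true)}

/-- The order topology on the double-arrow space, induced by the lexicographic order. -/
def DATop : TopologicalSpace ↥DASet := Preorder.topology ↥DASet

lemma sorg_nhd {U : Set ℝ}
    (hU : TopologicalSpace.GenerateOpen {s : Set ℝ | ∃ a b : ℝ, s = Set.Ico a b} U) :
    ∀ x ∈ U, ∃ ε > 0, Set.Ico x (x + ε) ⊆ U := by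
  induction hU with
  | basic s hs =>
    rintro x hx
    obtain ⟨a, b, rfl⟩ := hs
    refine ⟨b - x, by linarith [hx.2], ?_⟩
    rintro y ⟨h1, h2⟩
    exact ⟨le_trans hx.1 h1, by linarith⟩
  | univ => exact fun x _ => ⟨1, one_pos, fun y _ => trivial⟩
  | inter s t _ _ ihs iht =>
    rintro x ⟨hxs, hxt⟩
    obtain ⟨ε1, hε1, h1⟩ := ihs x hxs
    obtain ⟨ε2, hε2, h2⟩ := iht x hxt
    exact ⟨min ε1 ε2, lt_min hε1 hε2, fun y hy =>
      ⟨h1 ⟨hy.1, hy.2.trans_le (by gcongr; exact min_le_left _ _)⟩,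
       h2 ⟨hy.1, hy.2.trans_le (by gcongr; exact min_le_right _ _)⟩⟩⟩
  | sUnion S hS ih =>
    rintro x ⟨t, htS, hxt⟩
    obtain ⟨ε, hε, h⟩ := ih t htS x hxt
    exact ⟨ε, hε, fun y hy => ⟨t, htS, h hy⟩⟩

lemma sorg_isOpen_Ico (a b : ℝ) : IsOpen[sorgenfreyTop] (Set.Ico a b) :=
  TopologicalSpace.GenerateOpen.basic _ ⟨a, b, rfl⟩


namespace Stmt19Aux
def A (z : ↥DASet) : ℝ := (ofLex z.1).1
def Bc (z : ↥DASet) : Bool := (ofLex z.1).2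

lemma A_nonneg (z : ↥DASet) : 0 ≤ A z := by
  rcases z.2 with ⟨h1, _, _⟩ | ⟨h1, _, _⟩
  · exact le_of_lt h1
  · exact h1
lemma A_le_one (z : ↥DASet) : A z ≤ 1 := by
  rcases z.2 with ⟨_, h2, _⟩ | ⟨_, h2, _⟩
  · exact h2
  · exact le_of_lt h2
lemma A_pos (z : ↥DASet) (hz : Bc z = false) : 0 < A z := by
  rcases z.2 with ⟨h1, _, _⟩ | ⟨_, _, h3⟩
  · exact h1
  · exact absurd (hz ▸ h3 : (false : Bool) = true) (by decide)
lemma A_lt_one (z : ↥DASet) (hz : Bc z = true) : A z < 1 := by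
  rcases z.2 with ⟨_, _, h3⟩ | ⟨_, h2, _⟩
  · exact absurd (hz ▸ h3 : (true : Bool) = false) (by decide)
  · exact h2

lemma le_iff' (z w : ↥DASet) : z ≤ w ↔ A z < A w ∨ (A z = A w ∧ Bc z ≤ Bc w) :=
  Subtype.coe_le_coe.symm.trans Prod.Lex.le_iff
lemma lt_iff' (z w : ↥DASet) : z < w ↔ A z < A w ∨ (A z = A w ∧ Bc z < Bc w) :=
  Subtype.coe_lt_coe.symm.trans Prod.Lex.lt_iff

def mk0 (t : ℝ) (h1 : 0 < t) (h2 : t ≤ 1) : ↥DASet := ⟨toLex (t, false), Or.inl ⟨h1, h2, rfl⟩⟩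
def mk1 (t : ℝ) (h1 : 0 ≤ t) (h2 : t < 1) : ↥DASet := ⟨toLex (t, true), Or.inr ⟨h1, h2, rfl⟩⟩
@[simp] lemma A_mk0 (t h1 h2) : A (mk0 t h1 h2) = t := rfl
@[simp] lemma A_mk1 (t h1 h2) : A (mk1 t h1 h2) = t := rfl
@[simp] lemma Bc_mk0 (t h1 h2) : Bc (mk0 t h1 h2) = false := rfl
@[simp] lemma Bc_mk1 (t h1 h2) : Bc (mk1 t h1 h2) = true := rfl

lemma isOpen_Iic_bot (z : ↥DASet) (hz : Bc z = false) : IsOpen[DATop] (Set.Iic z) := by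
  letI := DATop
  haveI : OrderTopology ↥DASet := ⟨rfl⟩
  show IsOpen (Set.Iic z)
  rcases lt_or_eq_of_le (A_le_one z) with h1 | h1
  · have he : Set.Iic z = Set.Iio (mk1 (A z) (le_of_lt (A_pos z hz)) h1) := by
      ext w
      simp only [Set.mem_Iic, Set.mem_Iio]
      rw [le_iff', lt_iff']
      constructor
      · rintro (h | ⟨he, hb⟩)
        · exact Or.inl (by simpa using h)
        · refine Or.inr ⟨by simpa using he, ?_⟩
          simp only [Bc_mk1]
          rw [hz] at hb
          have : Bc w = false := le_antisymm hb (Bool.false_le _)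
          rw [this]; decide
      · rintro (h | ⟨he, hb⟩)
        · exact Or.inl (by simpa using h)
        · refine Or.inr ⟨by simpa using he, ?_⟩
          simp only [Bc_mk1] at hb
          rw [Bool.lt_iff] at hb
          rw [hb.1, hz]
    rw [he]; exact isOpen_Iio
  · have he : Set.Iic z = Set.univ := by
      ext w
      simp only [Set.mem_Iic, Set.mem_univ, iff_true]
      rw [le_iff']
      rcases lt_or_eq_of_le (A_le_one w) with h | h
      · exact Or.inl (by rw [← h1] at h; exact h)
      · refine Or.inr ⟨by rw [h, h1], ?_⟩
        cases hbw : Bc w with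
        | false => rw [hz]
        | true => exact absurd h (ne_of_lt (A_lt_one w hbw))
    rw [he]; exact isOpen_univ

lemma isOpen_Ici_top (z : ↥DASet) (hz : Bc z = true) : IsOpen[DATop] (Set.Ici z) := by
  letI := DATop
  haveI : OrderTopology ↥DASet := ⟨rfl⟩
  show IsOpen (Set.Ici z)
  rcases lt_or_eq_of_le (A_nonneg z) with h1 | h1
  · have he : Set.Ici z = Set.Ioi (mk0 (A z) h1 (le_of_lt (A_lt_one z hz))) := by
      ext w
      simp only [Set.mem_Ici, Set.mem_Ioi]
      rw [le_iff', lt_iff']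
      constructor
      · rintro (h | ⟨he, hb⟩)
        · exact Or.inl (by simpa using h)
        · refine Or.inr ⟨by simpa using he, ?_⟩
          rw [hz] at hb
          have hbw : Bc w = true := le_antisymm (Bool.le_true _) hb
          rw [Bc_mk0, hbw]; decide
      · rintro (h | ⟨he, hb⟩)
        · exact Or.inl (by simpa using h)
        · refine Or.inr ⟨by simpa using he, ?_⟩
          rw [Bc_mk0, Bool.lt_iff] at hb
          rw [hb.2, hz]
    rw [he]; exact isOpen_Ioi
  · have he : Set.Ici z = Set.univ := by
      ext w
      simp only [Set.mem_Ici, Set.mem_univ, iff_true]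
      rw [le_iff']
      rcases lt_or_eq_of_le (A_nonneg w) with h | h
      · exact Or.inl (by rw [← h1]; exact h)
      · refine Or.inr ⟨by rw [← h1, ← h], ?_⟩
        cases hbw : Bc w with
        | false => exact absurd h (ne_of_lt (A_pos w hbw))
        | true => rw [hz]
    rw [he]; exact isOpen_univ

end Stmt19Aux

namespace Stmt19Aux

/-- The cover sets for the Baire argument: points where `f` is locally-to-the-right
below (resp. above) its value, with modulus `1/(k.1+1)`. -/
def Sset (f : ℝ → ↥DASet) (k : ℕ × Bool) : Set ℝ :=
  {x | Bc (f x) = k.2 ∧ ∀ y : ℝ, x ≤ y → y < x + 1 / ((k.1 : ℝ) + 1) →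
    (cond k.2 (f x ≤ f y) (f y ≤ f x))}

end Stmt19Aux

open Stmt19Aux

/-- The double-arrow space is not a continuous open image of the Sorgenfrey line. -/
theorem stmt19 :
    ¬ ∃ f : ℝ → ↥DASet, @Continuous ℝ ↥DASet sorgenfreyTop DATop f ∧
      @IsOpenMap ℝ ↥DASet sorgenfreyTop DATop f ∧ Function.Surjective f := by
  rintro ⟨f, hc, ho, -⟩
  letI : TopologicalSpace ↥DASet := DATop
  haveI : OrderTopology ↥DASet := ⟨rfl⟩
  -- continuity, through the Sorgenfrey neighborhood basis
  have hcont : ∀ (x : ℝ) (N : Set ↥DASet), IsOpen N → f x ∈ N →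
      ∃ ε > 0, ∀ y : ℝ, x ≤ y → y < x + ε → f y ∈ N := by
    intro x N hN hfx
    have hpre : TopologicalSpace.GenerateOpen {s : Set ℝ | ∃ a b : ℝ, s = Set.Ico a b}
        (f ⁻¹' N) := @Continuous.isOpen_preimage ℝ ↥DASet sorgenfreyTop DATop f hc N hN
    obtain ⟨ε, hε, hsub⟩ := sorg_nhd hpre x hfx
    exact ⟨ε, hε, fun y h1 h2 => hsub ⟨h1, h2⟩⟩
  -- openness
  have hopen : ∀ (x ε : ℝ), 0 < ε → f '' Set.Ico x (x + ε) ∈ 𝓝 (f x) := by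
    intro x ε hε
    exact (ho _ (sorg_isOpen_Ico x (x + ε))).mem_nhds ⟨x, ⟨le_refl x, by linarith⟩, rfl⟩
  -- the cover
  have hcov : (⋃ k, closure (Sset f k)) = Set.univ := by
    apply Set.eq_univ_of_forall
    intro x
    rw [Set.mem_iUnion]
    cases hbx : Bc (f x) with
    | false =>
      obtain ⟨ε, hε, hmem⟩ := hcont x (Set.Iic (f x)) (isOpen_Iic_bot _ hbx)
        (Set.mem_Iic.mpr le_rfl)
      obtain ⟨n, hn⟩ := exists_nat_one_div_lt hε
      refine ⟨(n, false), subset_closure ⟨hbx, fun y h1 h2 => ?_⟩⟩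
      exact hmem y h1 (h2.trans (by linarith))
    | true =>
      obtain ⟨ε, hε, hmem⟩ := hcont x (Set.Ici (f x)) (isOpen_Ici_top _ hbx)
        (Set.mem_Ici.mpr le_rfl)
      obtain ⟨n, hn⟩ := exists_nat_one_div_lt hε
      refine ⟨(n, true), subset_closure ⟨hbx, fun y h1 h2 => ?_⟩⟩
      exact hmem y h1 (h2.trans (by linarith))
  -- Baire
  obtain ⟨k, x₀, hx₀⟩ := nonempty_interior_of_iUnion_of_closed
    (fun k => isClosed_closure (s := Sset f k)) hcov
  rw [mem_interior_iff_mem_nhds, Metric.mem_nhds_iff] at hx₀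
  obtain ⟨r, hr, hball⟩ := hx₀
  set r' : ℝ := min (r / 2) (1 / (2 * ((k.1 : ℝ) + 1))) with hr'def
  have hnpos : (0 : ℝ) < (k.1 : ℝ) + 1 := by positivity
  have hr'pos : 0 < r' := lt_min (by linarith) (by positivity)
  have hr'r : r' < r := lt_of_le_of_lt (min_le_left _ _) (by linarith)
  have hlen : 2 * r' ≤ 1 / ((k.1 : ℝ) + 1) := by
    have h1 := min_le_right (r / 2) (1 / (2 * ((k.1 : ℝ) + 1)))
    have hne : ((k.1 : ℝ) + 1) ≠ 0 := ne_of_gt hnpos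
    have h3 : 2 * ((1 : ℝ) / (2 * ((k.1 : ℝ) + 1))) = 1 / ((k.1 : ℝ) + 1) := by
      field_simp
    rw [← hr'def] at h1
    linarith
  have hsubI : Set.Ioo (x₀ - r') (x₀ + r') ⊆ closure (Sset f k) := by
    intro y hy
    apply hball
    rw [Real.ball_eq_Ioo]
    exact ⟨by linarith [hy.1], by linarith [hy.2]⟩
  have hdense : ∀ u v : ℝ, x₀ - r' ≤ u → v ≤ x₀ + r' → u < v →
      ∃ d, d ∈ Sset f k ∧ u < d ∧ d < v := by
    intro u v hu hv huv
    have hmid : (u + v) / 2 ∈ closure (Sset f k) := hsubI ⟨by linarith, by linarith⟩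
    rw [_root_.mem_closure_iff] at hmid
    obtain ⟨d, hdo, hds⟩ := hmid (Set.Ioo u v) isOpen_Ioo ⟨by linarith, by linarith⟩
    exact ⟨d, hds, hdo.1, hdo.2⟩
  have hSstep : ∀ d d' : ℝ, d ∈ Sset f k → x₀ - r' < d → d ≤ d' → d' < x₀ + r' →
      cond k.2 (f d ≤ f d') (f d' ≤ f d) := by
    intro d d' hd hd1 hdd' hd2
    exact hd.2 d' hdd' (by linarith)
  cases hk2 : k.2 with
  | true =>
    -- dense set of "top" points with uniform modulus; bottom points are ≤-monotone
    have claimMono : ∀ x y : ℝ, x ∈ Set.Ioo (x₀ - r') (x₀ + r') →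
        y ∈ Set.Ioo (x₀ - r') (x₀ + r') → x < y →
        Bc (f x) = false → Bc (f y) = false → A (f x) ≤ A (f y) := by
      intro x y hxI hyI hxy hbx hby
      by_contra hlt
      push_neg at hlt
      set m : ℝ := (A (f y) + A (f x)) / 2 with hm
      have hm1 : A (f y) < m := by rw [hm]; linarith
      have hm2 : m < A (f x) := by rw [hm]; linarith
      have hm0 : 0 ≤ m := le_of_lt (lt_trans (A_pos _ hby) hm1)
      have hmlt1 : m < 1 := lt_of_lt_of_le hm2 (A_le_one _)
      have hw : mk1 m hm0 hmlt1 < f x := (lt_iff' _ _).2 (Or.inl (by rw [A_mk1]; exact hm2))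
      obtain ⟨ε₁, hε₁, h1⟩ := hcont x (Set.Ioi (mk1 m hm0 hmlt1)) isOpen_Ioi
        (Set.mem_Ioi.mpr hw)
      obtain ⟨d, hdS, hd1, hd2⟩ := hdense x (min (x + ε₁) y) (le_of_lt hxI.1)
        (le_trans (min_le_right _ _) (le_of_lt hyI.2)) (lt_min (by linarith) hxy)
      have hfd : mk1 m hm0 hmlt1 < f d :=
        h1 d (le_of_lt hd1) (lt_of_lt_of_le hd2 (min_le_left _ _))
      have hbd : Bc (f d) = true := hk2 ▸ hdS.1
      have hAd : m < A (f d) := by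
        rcases (lt_iff' _ _).1 hfd with h | ⟨_, hb⟩
        · rwa [A_mk1] at h
        · rw [Bc_mk1, Bool.lt_iff] at hb
          exact absurd hb.1 (by decide)
      obtain ⟨ε₂, hε₂, h2⟩ := hcont y (Set.Iic (f y)) (isOpen_Iic_bot _ hby)
        (Set.mem_Iic.mpr le_rfl)
      obtain ⟨d', hd'S, hd'1, hd'2⟩ := hdense y (min (y + ε₂) (x₀ + r')) (le_of_lt hyI.1)
        (min_le_right _ _) (lt_min (by linarith) hyI.2)
      have hfd' : f d' ≤ f y := h2 d' (le_of_lt hd'1) (lt_of_lt_of_le hd'2 (min_le_left _ _))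
      have hbd' : Bc (f d') = true := hk2 ▸ hd'S.1
      have hAd' : A (f d') < A (f y) := by
        rcases (le_iff' _ _).1 hfd' with h | ⟨_, hb⟩
        · exact h
        · rw [hby] at hb
          exact absurd (hbd' ▸ le_antisymm hb (Bool.false_le _) : (true : Bool) = false)
            (by decide)
      have hle : f d ≤ f d' := by
        have := hSstep d d' hdS (lt_trans hxI.1 hd1)
          (le_of_lt (lt_trans (lt_of_lt_of_le hd2 (min_le_right _ _)) hd'1))
          (lt_of_lt_of_le hd'2 (min_le_right _ _))
        rw [hk2] at this
        exact this
      have hAdd' : A (f d) ≤ A (f d') := by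
        rcases (le_iff' _ _).1 hle with h | ⟨h, _⟩
        · exact le_of_lt h
        · exact le_of_eq h
      linarith
    by_cases hB : ∃ x, x ∈ Set.Ioo (x₀ - r') (x₀ + r') ∧ Bc (f x) = false
    · obtain ⟨x, hxI, hbx⟩ := hB
      have hεx : (0 : ℝ) < x₀ + r' - x := by linarith [hxI.2]
      have himg := hopen x (x₀ + r' - x) hεx
      have hexl : ∃ l, l < f x :=
        ⟨mk1 0 le_rfl one_pos, (lt_iff' _ _).2 (Or.inl (by rw [A_mk1]; exact A_pos _ hbx))⟩
      obtain ⟨w, hw, hsub⟩ := exists_Ioc_subset_of_mem_nhds himg hexl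
      have hcw : A w < A (f x) := by
        rcases (lt_iff' _ _).1 hw with h | ⟨_, hb⟩
        · exact h
        · rw [hbx, Bool.lt_iff] at hb
          exact absurd hb.2 (by decide)
      set t : ℝ := (A w + A (f x)) / 2 with htdef
      have ht1 : A w < t := by rw [htdef]; linarith
      have ht2 : t < A (f x) := by rw [htdef]; linarith
      have ht0 : 0 < t := lt_of_le_of_lt (A_nonneg w) ht1
      have htle : t ≤ 1 := le_of_lt (lt_of_lt_of_le ht2 (A_le_one _))
      have hmem : mk0 t ht0 htle ∈ Set.Ioc w (f x) :=
        ⟨(lt_iff' _ _).2 (Or.inl (by rw [A_mk0]; exact ht1)),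
         (le_iff' _ _).2 (Or.inl (by rw [A_mk0]; exact ht2))⟩
      obtain ⟨y, hyIco, hfy⟩ := hsub hmem
      have hby : Bc (f y) = false := by rw [hfy]; rfl
      have hAy : A (f y) = t := by rw [hfy, A_mk0]
      have hxy : x < y := by
        rcases lt_or_eq_of_le hyIco.1 with h | h
        · exact h
        · exfalso; rw [← h] at hAy; linarith
      have hyI : y ∈ Set.Ioo (x₀ - r') (x₀ + r') :=
        ⟨lt_of_lt_of_le hxI.1 hyIco.1, by linarith [hyIco.2]⟩
      have := claimMono x y hxI hyI hxy hbx hby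
      rw [hAy] at this
      linarith
    · push_neg at hB
      have hx₀I : x₀ ∈ Set.Ioo (x₀ - r') (x₀ + r') := ⟨by linarith, by linarith⟩
      have hbx₀ : Bc (f x₀) = true := by
        cases h : Bc (f x₀) with
        | false => exact absurd h (hB x₀ hx₀I)
        | true => rfl
      have himg := hopen x₀ r' hr'pos
      have hexu : ∃ u, f x₀ < u :=
        ⟨mk0 1 one_pos le_rfl, (lt_iff' _ _).2 (Or.inl (by rw [A_mk0]; exact A_lt_one _ hbx₀))⟩
      obtain ⟨u, hu, hsub⟩ := exists_Ico_subset_of_mem_nhds himg hexu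
      have hcu : A (f x₀) < A u := by
        rcases (lt_iff' _ _).1 hu with h | ⟨_, hb⟩
        · exact h
        · rw [hbx₀, Bool.lt_iff] at hb
          exact absurd hb.1 (by decide)
      set t : ℝ := (A (f x₀) + A u) / 2 with htdef
      have ht1 : A (f x₀) < t := by rw [htdef]; linarith
      have ht2 : t < A u := by rw [htdef]; linarith
      have ht0 : 0 < t := lt_of_le_of_lt (A_nonneg _) ht1
      have htle : t ≤ 1 := le_of_lt (lt_of_lt_of_le ht2 (A_le_one _))
      have hmem : mk0 t ht0 htle ∈ Set.Ico (f x₀) u :=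
        ⟨(le_iff' _ _).2 (Or.inl (by rw [A_mk0]; exact ht1)),
         (lt_iff' _ _).2 (Or.inl (by rw [A_mk0]; exact ht2))⟩
      obtain ⟨y, hyIco, hfy⟩ := hsub hmem
      have hby : Bc (f y) = false := by rw [hfy]; rfl
      exact hB y ⟨lt_of_lt_of_le (by linarith) hyIco.1, by linarith [hyIco.2]⟩ hby
  | false =>
    have claimMono : ∀ x y : ℝ, x ∈ Set.Ioo (x₀ - r') (x₀ + r') →
        y ∈ Set.Ioo (x₀ - r') (x₀ + r') → x < y →
        Bc (f x) = true → Bc (f y) = true → A (f y) ≤ A (f x) := by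
      intro x y hxI hyI hxy hbx hby
      by_contra hlt
      push_neg at hlt
      set m : ℝ := (A (f x) + A (f y)) / 2 with hm
      have hm1 : A (f x) < m := by rw [hm]; linarith
      have hm2 : m < A (f y) := by rw [hm]; linarith
      have hm0 : 0 < m := lt_of_le_of_lt (A_nonneg _) hm1
      have hmle1 : m ≤ 1 := le_of_lt (lt_of_lt_of_le hm2 (A_le_one _))
      have hw : f x < mk0 m hm0 hmle1 := (lt_iff' _ _).2 (Or.inl (by rw [A_mk0]; exact hm1))
      obtain ⟨ε₁, hε₁, h1⟩ := hcont x (Set.Iio (mk0 m hm0 hmle1)) isOpen_Iio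
        (Set.mem_Iio.mpr hw)
      obtain ⟨d, hdS, hd1, hd2⟩ := hdense x (min (x + ε₁) y) (le_of_lt hxI.1)
        (le_trans (min_le_right _ _) (le_of_lt hyI.2)) (lt_min (by linarith) hxy)
      have hfd : f d < mk0 m hm0 hmle1 :=
        h1 d (le_of_lt hd1) (lt_of_lt_of_le hd2 (min_le_left _ _))
      have hbd : Bc (f d) = false := hk2 ▸ hdS.1
      have hAd : A (f d) < m := by
        rcases (lt_iff' _ _).1 hfd with h | ⟨_, hb⟩
        · rwa [A_mk0] at h
        · rw [Bc_mk0, Bool.lt_iff] at hb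
          exact absurd hb.2 (by decide)
      obtain ⟨ε₂, hε₂, h2⟩ := hcont y (Set.Ici (f y)) (isOpen_Ici_top _ hby)
        (Set.mem_Ici.mpr le_rfl)
      obtain ⟨d', hd'S, hd'1, hd'2⟩ := hdense y (min (y + ε₂) (x₀ + r')) (le_of_lt hyI.1)
        (min_le_right _ _) (lt_min (by linarith) hyI.2)
      have hfd' : f y ≤ f d' := h2 d' (le_of_lt hd'1) (lt_of_lt_of_le hd'2 (min_le_left _ _))
      have hbd' : Bc (f d') = false := hk2 ▸ hd'S.1
      have hAd' : A (f y) < A (f d') := by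
        rcases (le_iff' _ _).1 hfd' with h | ⟨_, hb⟩
        · exact h
        · rw [hby] at hb
          have hbt : Bc (f d') = true := le_antisymm (Bool.le_true _) hb
          rw [hbd'] at hbt
          exact absurd hbt (by decide)
      have hle : f d' ≤ f d := by
        have := hSstep d d' hdS (lt_trans hxI.1 hd1)
          (le_of_lt (lt_trans (lt_of_lt_of_le hd2 (min_le_right _ _)) hd'1))
          (lt_of_lt_of_le hd'2 (min_le_right _ _))
        rw [hk2] at this
        exact this
      have hAdd' : A (f d') ≤ A (f d) := by
        rcases (le_iff' _ _).1 hle with h | ⟨h, _⟩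
        · exact le_of_lt h
        · exact le_of_eq h
      linarith
    by_cases hT : ∃ x, x ∈ Set.Ioo (x₀ - r') (x₀ + r') ∧ Bc (f x) = true
    · obtain ⟨x, hxI, hbx⟩ := hT
      have hεx : (0 : ℝ) < x₀ + r' - x := by linarith [hxI.2]
      have himg := hopen x (x₀ + r' - x) hεx
      have hexu : ∃ u, f x < u :=
        ⟨mk0 1 one_pos le_rfl, (lt_iff' _ _).2 (Or.inl (by rw [A_mk0]; exact A_lt_one _ hbx))⟩
      obtain ⟨u, hu, hsub⟩ := exists_Ico_subset_of_mem_nhds himg hexu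
      have hcu : A (f x) < A u := by
        rcases (lt_iff' _ _).1 hu with h | ⟨_, hb⟩
        · exact h
        · rw [hbx, Bool.lt_iff] at hb
          exact absurd hb.1 (by decide)
      set t : ℝ := (A (f x) + A u) / 2 with htdef
      have ht1 : A (f x) < t := by rw [htdef]; linarith
      have ht2 : t < A u := by rw [htdef]; linarith
      have ht0 : 0 ≤ t := le_of_lt (lt_of_le_of_lt (A_nonneg _) ht1)
      have htlt : t < 1 := lt_of_lt_of_le ht2 (A_le_one _)
      have hmem : mk1 t ht0 htlt ∈ Set.Ico (f x) u :=
        ⟨(le_iff' _ _).2 (Or.inl (by rw [A_mk1]; exact ht1)),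
         (lt_iff' _ _).2 (Or.inl (by rw [A_mk1]; exact ht2))⟩
      obtain ⟨y, hyIco, hfy⟩ := hsub hmem
      have hby : Bc (f y) = true := by rw [hfy]; rfl
      have hAy : A (f y) = t := by rw [hfy, A_mk1]
      have hxy : x < y := by
        rcases lt_or_eq_of_le hyIco.1 with h | h
        · exact h
        · exfalso; rw [← h] at hAy; linarith
      have hyI : y ∈ Set.Ioo (x₀ - r') (x₀ + r') :=
        ⟨lt_of_lt_of_le hxI.1 hyIco.1, by linarith [hyIco.2]⟩
      have := claimMono x y hxI hyI hxy hbx hby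
      rw [hAy] at this
      linarith
    · push_neg at hT
      have hx₀I : x₀ ∈ Set.Ioo (x₀ - r') (x₀ + r') := ⟨by linarith, by linarith⟩
      have hbx₀ : Bc (f x₀) = false := by
        cases h : Bc (f x₀) with
        | false => rfl
        | true => exact absurd h (hT x₀ hx₀I)
      have himg := hopen x₀ r' hr'pos
      have hexl : ∃ l, l < f x₀ :=
        ⟨mk1 0 le_rfl one_pos, (lt_iff' _ _).2 (Or.inl (by rw [A_mk1]; exact A_pos _ hbx₀))⟩
      obtain ⟨w, hw, hsub⟩ := exists_Ioc_subset_of_mem_nhds himg hexl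
      have hcw : A w < A (f x₀) := by
        rcases (lt_iff' _ _).1 hw with h | ⟨_, hb⟩
        · exact h
        · rw [hbx₀, Bool.lt_iff] at hb
          exact absurd hb.2 (by decide)
      set t : ℝ := (A w + A (f x₀)) / 2 with htdef
      have ht1 : A w < t := by rw [htdef]; linarith
      have ht2 : t < A (f x₀) := by rw [htdef]; linarith
      have ht0 : 0 ≤ t := le_of_lt (lt_of_le_of_lt (A_nonneg w) ht1)
      have htlt : t < 1 := lt_of_lt_of_le ht2 (A_le_one _)
      have hmem : mk1 t ht0 htlt ∈ Set.Ioc w (f x₀) :=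
        ⟨(lt_iff' _ _).2 (Or.inl (by rw [A_mk1]; exact ht1)),
         (le_iff' _ _).2 (Or.inl (by rw [A_mk1]; exact ht2))⟩
      obtain ⟨y, hyIco, hfy⟩ := hsub hmem
      have hby : Bc (f y) = true := by rw [hfy]; rfl
      exact hT y ⟨lt_of_lt_of_le (by linarith) hyIco.1, by linarith [hyIco.2]⟩ hby
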